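/- Theorem 1 (validity of bounds with non-descendant covariates): let P be a counterfactual joint distribution on Ω and let k ≤ n. The set S(P) is a nonempty compact subset of the probability simplex on Ω, hence the objective Q ↦ Q({(r,z,t) : r s = s for all s < k}) attains a minimum value LB and a maximum value UB on S(P); moreover LB ≤ PNS(k) ≤ UB, where PNS(k) := P({(r,z,t) : r s = s for all s < k}). -/

import Mathlib

/-- The probability of an event `E` under a mass function `P` on a finite type. -/
noncomputable def prob {Ω : Type*} [Fintype Ω] (P : Ω → ℝ) (E : Set Ω) : ℝ :=
  ∑ ω, E.indicator P ω

/-- The probability simplex: nonnegative functions summing to one. -/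
def simplexSet (Ω : Type*) [Fintype Ω] : Set (Ω → ℝ) :=
  {Q | (∀ ω, 0 ≤ Q ω) ∧ ∑ ω, Q ω = 1}

/-- The counterfactual sample space: potential outcomes `r : Fin n → Fin n`
(`r s` is `Y_{x_s}`), covariates `z : Π i, Z i`, and treatment `t : Fin n`. -/
abbrev CfOmega (n m : ℕ) (Z : Fin m → Type) [∀ i, Fintype (Z i)] : Type :=
  (Fin n → Fin n) × ((i : Fin m) → Z i) × Fin n

/-- The Theorem 1 feasible set `S(P)`: mass functions matching the experimental
constraints `Q(Y_{x_t} = s, Z_I = z_I) = P(Y_{x_t} = s, Z_I = z_I)` and the observational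
constraints `Q(X = t, Y_{x_t} = s, Z_I = z_I) = P(X = t, Y_{x_t} = s, Z_I = z_I)`
for every subset `I` of covariate indices. -/
def feasibleSet (n m : ℕ) (Z : Fin m → Type) [∀ i, Fintype (Z i)]
    (P : CfOmega n m Z → ℝ) : Set (CfOmega n m Z → ℝ) :=
  {Q | Q ∈ simplexSet (CfOmega n m Z) ∧
    ∀ (s t : Fin n) (I : Finset (Fin m)) (zv : (i : Fin m) → Z i),
      (prob Q {ω | ω.1 t = s ∧ ∀ i ∈ I, ω.2.1 i = zv i} =
        prob P {ω | ω.1 t = s ∧ ∀ i ∈ I, ω.2.1 i = zv i}) ∧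
      (prob Q {ω | ω.2.2 = t ∧ ω.1 t = s ∧ ∀ i ∈ I, ω.2.1 i = zv i} =
        prob P {ω | ω.2.2 = t ∧ ω.1 t = s ∧ ∀ i ∈ I, ω.2.1 i = zv i})}

/-- The PNS(k) event `{(r,z,t) : r s = s for all s < k}` (after relabeling of outcomes). -/
def pnsEvent (n m : ℕ) (Z : Fin m → Type) [∀ i, Fintype (Z i)] (k : ℕ) :
    Set (CfOmega n m Z) :=
  {ω | ∀ s : Fin n, (s : ℕ) < k → ω.1 s = s}

lemma prob_continuous {Ω : Type*} [Fintype Ω] (E : Set Ω) :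
    Continuous fun Q : Ω → ℝ => prob Q E := by
  unfold prob
  apply continuous_finset_sum
  intro ω _
  by_cases h : ω ∈ E
  · simpa [Set.indicator_of_mem h] using (continuous_apply ω)
  · simp only [Set.indicator_of_notMem h]
    exact continuous_const

lemma simplexSet_eq (Ω : Type*) [Fintype Ω] :
    simplexSet Ω = stdSimplex ℝ Ω := rfl

lemma feasible_closed (n m : ℕ) (Z : Fin m → Type) [∀ i, Fintype (Z i)]
    (P : CfOmega n m Z → ℝ) : IsClosed (feasibleSet n m Z P) := by
  have h1 : feasibleSet n m Z P =
      simplexSet (CfOmega n m Z) ∩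
      ⋂ (s : Fin n) (t : Fin n) (I : Finset (Fin m)) (zv : (i : Fin m) → Z i),
        ({Q | prob Q {ω | ω.1 t = s ∧ ∀ i ∈ I, ω.2.1 i = zv i} =
            prob P {ω | ω.1 t = s ∧ ∀ i ∈ I, ω.2.1 i = zv i}} ∩
         {Q | prob Q {ω | ω.2.2 = t ∧ ω.1 t = s ∧ ∀ i ∈ I, ω.2.1 i = zv i} =
            prob P {ω | ω.2.2 = t ∧ ω.1 t = s ∧ ∀ i ∈ I, ω.2.1 i = zv i}}) := by
    ext Q
    simp only [feasibleSet, Set.mem_setOf_eq, Set.mem_inter_iff, Set.mem_iInter]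
  rw [h1]
  apply IsClosed.inter
  · have : simplexSet (CfOmega n m Z) = stdSimplex ℝ (CfOmega n m Z) := rfl
    rw [this]; exact isClosed_stdSimplex ℝ (CfOmega n m Z)
  · refine isClosed_iInter fun s => isClosed_iInter fun t => isClosed_iInter fun I =>
      isClosed_iInter fun zv => IsClosed.inter ?_ ?_
    · exact isClosed_eq (prob_continuous _) continuous_const
    · exact isClosed_eq (prob_continuous _) continuous_const

/-- Theorem 1 (validity of bounds with non-descendant covariates): `S(P)` is a nonempty
compact subset of the probability simplex, the objective `Q ↦ Q(PNS(k)-event)` attains a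
minimum `LB` and a maximum `UB` on `S(P)`, and `LB ≤ PNS(k) ≤ UB`. -/
theorem theorem1_valid_bounds
    (n m : ℕ) (Z : Fin m → Type) [∀ i, Fintype (Z i)] [∀ i, Nonempty (Z i)]
    (P : CfOmega n m Z → ℝ) (hP : P ∈ simplexSet (CfOmega n m Z))
    (k : ℕ) (hk : k ≤ n) :
    (feasibleSet n m Z P).Nonempty ∧
    IsCompact (feasibleSet n m Z P) ∧
    feasibleSet n m Z P ⊆ simplexSet (CfOmega n m Z) ∧
    ∃ LB UB : ℝ,
      IsLeast ((fun Q => prob Q (pnsEvent n m Z k)) '' feasibleSet n m Z P) LB ∧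
      IsGreatest ((fun Q => prob Q (pnsEvent n m Z k)) '' feasibleSet n m Z P) UB ∧
      LB ≤ prob P (pnsEvent n m Z k) ∧ prob P (pnsEvent n m Z k) ≤ UB := by
  have hPmem : P ∈ feasibleSet n m Z P := ⟨hP, fun s t I zv => ⟨rfl, rfl⟩⟩
  have hsub : feasibleSet n m Z P ⊆ simplexSet (CfOmega n m Z) := fun Q hQ => hQ.1
  have hcomp : IsCompact (feasibleSet n m Z P) := by
    refine IsCompact.of_isClosed_subset ?_ (feasible_closed n m Z P) hsub
    exact isCompact_stdSimplex ℝ (CfOmega n m Z)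
  have hne : (feasibleSet n m Z P).Nonempty := ⟨P, hPmem⟩
  have hcont : ContinuousOn (fun Q => prob Q (pnsEvent n m Z k)) (feasibleSet n m Z P) :=
    (prob_continuous _).continuousOn
  obtain ⟨Qmin, hQmin, hmin⟩ := hcomp.exists_isMinOn hne hcont
  obtain ⟨Qmax, hQmax, hmax⟩ := hcomp.exists_isMaxOn hne hcont
  refine ⟨hne, hcomp, hsub, prob Qmin (pnsEvent n m Z k), prob Qmax (pnsEvent n m Z k),
    ⟨⟨Qmin, hQmin, rfl⟩, ?_⟩, ⟨⟨Qmax, hQmax, rfl⟩, ?_⟩, hmin hPmem, hmax hPmem⟩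
  · rintro x ⟨Q, hQ, rfl⟩; exact hmin hQ
  · rintro x ⟨Q, hQ, rfl⟩; exact hmax hQ
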